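/- Turán's sieve inequality: Let A be a finite set, P a finite set of primes, and for each p ∈ P let A_p ⊆ A. Suppose for each p ∈ P we have |A_p| = δ_p |A| + R_p with 0 ≤ δ_p < 1, and for each pair p, q ∈ P we have |A_p ∩ A_q| = δ_p δ_q |A| + R_{p,q} (with R_{p,p} interpreted via |A_p| = δ_p^2|A| + R_{p,p}). Set U = ∑_{p ∈ P} δ_p and assume U > 0. Then the number S of elements of A lying in no A_p satisfies S ≤ |A|/U + (2/U) ∑_{p ∈ P} |R_p| + (1/U²) ∑_{p,q ∈ P} |R_{p,q}|. -/
import Mathlib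


theorem turan_sieve {α : Type*} [DecidableEq α] (A : Finset α) (P : Finset ℕ)
    (Ap : ℕ → Finset α) (hsub : ∀ p ∈ P, Ap p ⊆ A)
    (δ : ℕ → ℝ) (R : ℕ → ℝ) (Rpq : ℕ → ℕ → ℝ)
    (hδ : ∀ p ∈ P, 0 ≤ δ p ∧ δ p < 1)
    (hR : ∀ p ∈ P, ((Ap p).card : ℝ) = δ p * A.card + R p)
    (hRpq : ∀ p ∈ P, ∀ q ∈ P, ((Ap p ∩ Ap q).card : ℝ) = δ p * δ q * A.card + Rpq p q)
    (hU : 0 < ∑ p ∈ P, δ p) :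
    ((A \ P.biUnion Ap).card : ℝ) ≤
      (A.card : ℝ) / (∑ p ∈ P, δ p)
      + (2 / (∑ p ∈ P, δ p)) * ∑ p ∈ P, |R p|
      + (1 / (∑ p ∈ P, δ p) ^ 2) * ∑ p ∈ P, ∑ q ∈ P, |Rpq p q| := by
  set U := ∑ p ∈ P, δ p with hUdef
  have hU0 : U ≠ 0 := ne_of_gt hU
  set N : α → ℝ := fun a => ∑ p ∈ P, if a ∈ Ap p then (1:ℝ) else 0 with hNdef
  -- first moment
  have h1 : ∑ a ∈ A, N a = ∑ p ∈ P, ((Ap p).card : ℝ) := by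
    simp only [hNdef]
    rw [Finset.sum_comm]
    refine Finset.sum_congr rfl fun p hp => ?_
    rw [Finset.sum_ite_mem, Finset.inter_eq_right.mpr (hsub p hp),
      Finset.sum_const, nsmul_eq_mul, mul_one]
  -- second moment
  have h2 : ∑ a ∈ A, (N a) ^ 2 = ∑ p ∈ P, ∑ q ∈ P, ((Ap p ∩ Ap q).card : ℝ) := by
    have hpt : ∀ a ∈ A, (N a) ^ 2
        = ∑ p ∈ P, ∑ q ∈ P, (if a ∈ Ap p ∩ Ap q then (1:ℝ) else 0) := by
      intro a _
      simp only [hNdef, sq, Finset.sum_mul_sum]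
      refine Finset.sum_congr rfl fun p _ => Finset.sum_congr rfl fun q _ => ?_
      by_cases h1 : a ∈ Ap p <;> by_cases h2 : a ∈ Ap q <;>
        simp [h1, h2, Finset.mem_inter]
    rw [Finset.sum_congr rfl hpt, Finset.sum_comm]
    refine Finset.sum_congr rfl fun p hp => ?_
    rw [Finset.sum_comm]
    refine Finset.sum_congr rfl fun q hq => ?_
    rw [Finset.sum_ite_mem,
      Finset.inter_eq_right.mpr ((Finset.inter_subset_left).trans (hsub p hp)),
      Finset.sum_const, nsmul_eq_mul, mul_one]
  have e1 : ∑ p ∈ P, ((Ap p).card : ℝ) = U * A.card + ∑ p ∈ P, R p := by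
    rw [Finset.sum_congr rfl hR, Finset.sum_add_distrib, ← Finset.sum_mul]
  have e2 : ∑ p ∈ P, ∑ q ∈ P, ((Ap p ∩ Ap q).card : ℝ)
      = U * U * A.card + ∑ p ∈ P, ∑ q ∈ P, Rpq p q := by
    have : ∀ p ∈ P, ∑ q ∈ P, ((Ap p ∩ Ap q).card : ℝ)
        = δ p * U * A.card + ∑ q ∈ P, Rpq p q := by
      intro p hp
      rw [Finset.sum_congr rfl (fun q hq => hRpq p hp q hq), Finset.sum_add_distrib]
      congr 1
      rw [← Finset.sum_mul, ← Finset.mul_sum]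
    rw [Finset.sum_congr rfl this, Finset.sum_add_distrib]
    congr 1
    rw [← Finset.sum_mul, ← Finset.sum_mul]
  -- main identity
  have key : ∑ a ∈ A, (N a - U) ^ 2
      = ∑ p ∈ P, ∑ q ∈ P, Rpq p q - 2 * U * ∑ p ∈ P, R p := by
    have expand : ∑ a ∈ A, (N a - U) ^ 2
        = (∑ a ∈ A, (N a) ^ 2) - 2 * U * (∑ a ∈ A, N a) + U ^ 2 * A.card := by
      rw [Finset.sum_congr rfl (fun a _ => by ring :
        ∀ a ∈ A, (N a - U) ^ 2 = (N a) ^ 2 - 2 * U * N a + U ^ 2)]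
      rw [Finset.sum_add_distrib, Finset.sum_sub_distrib, Finset.sum_const,
        ← Finset.mul_sum, nsmul_eq_mul]
      ring
    rw [expand, h1, h2, e1, e2]
    ring
  -- lower bound by sifted set
  have lower : U ^ 2 * ((A \ P.biUnion Ap).card : ℝ) ≤ ∑ a ∈ A, (N a - U) ^ 2 := by
    have hsubS : A \ P.biUnion Ap ⊆ A := Finset.sdiff_subset
    have hzero : ∀ a ∈ A \ P.biUnion Ap, (N a - U) ^ 2 = U ^ 2 := by
      intro a ha
      have h := (Finset.mem_sdiff.mp ha).2
      have : N a = 0 := by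
        simp only [hNdef]
        refine Finset.sum_eq_zero fun p hp => ?_
        have : a ∉ Ap p := fun hap => h (Finset.mem_biUnion.mpr ⟨p, hp, hap⟩)
        simp [this]
      rw [this]; ring
    calc U ^ 2 * ((A \ P.biUnion Ap).card : ℝ)
        = ∑ a ∈ A \ P.biUnion Ap, (N a - U) ^ 2 := by
          rw [Finset.sum_congr rfl hzero, Finset.sum_const, nsmul_eq_mul, mul_comm]
      _ ≤ ∑ a ∈ A, (N a - U) ^ 2 :=
          Finset.sum_le_sum_of_subset_of_nonneg hsubS (fun a _ _ => sq_nonneg _)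
  have habs : ∑ p ∈ P, ∑ q ∈ P, Rpq p q - 2 * U * ∑ p ∈ P, R p
      ≤ ∑ p ∈ P, ∑ q ∈ P, |Rpq p q| + 2 * U * ∑ p ∈ P, |R p| := by
    have a1 : ∑ p ∈ P, ∑ q ∈ P, Rpq p q ≤ ∑ p ∈ P, ∑ q ∈ P, |Rpq p q| :=
      Finset.sum_le_sum fun p _ => Finset.sum_le_sum fun q _ => le_abs_self _
    have a2 : - ∑ p ∈ P, R p ≤ ∑ p ∈ P, |R p| := by
      calc - ∑ p ∈ P, R p = ∑ p ∈ P, (- R p) := by rw [Finset.sum_neg_distrib]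
        _ ≤ ∑ p ∈ P, |R p| := Finset.sum_le_sum fun p _ => neg_le_abs _
    nlinarith [hU]
  have main : U ^ 2 * ((A \ P.biUnion Ap).card : ℝ)
      ≤ ∑ p ∈ P, ∑ q ∈ P, |Rpq p q| + 2 * U * ∑ p ∈ P, |R p| :=
    (lower.trans_eq key).trans habs
  have hA0 : (0:ℝ) ≤ (A.card : ℝ) / U := div_nonneg (Nat.cast_nonneg _) hU.le
  have hU2 : (0:ℝ) < U ^ 2 := by positivity
  have step : ((A \ P.biUnion Ap).card : ℝ)
      ≤ (2 / U) * ∑ p ∈ P, |R p| + (1 / U ^ 2) * ∑ p ∈ P, ∑ q ∈ P, |Rpq p q| := by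
    rw [← le_div_iff₀' hU2] at main
    refine main.trans_eq ?_
    field_simp
    ring
  linarith [step, hA0]
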